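/- Let e' ≪ e be events of a branching process (e' a strong cause of e), and let ê be an event concurrent with both e' and e. Then the set difference of pasts ([e] \ [e']) is disjoint from the past [ê]. -/

import Mathlib

open Sum

/-- Nodes `x` and `y` of an occurrence net are in conflict if some condition
can reach both along paths exiting it by different arcs (arcs out of a
condition lead to events). -/
def bpConflict {C E : Type} (F : C ⊕ E → C ⊕ E → Prop) (x y : C ⊕ E) : Prop :=
  ∃ (c : C) (e₁ e₂ : E), e₁ ≠ e₂ ∧ F (inl c) (inr e₁) ∧ F (inl c) (inr e₂) ∧
    Relation.ReflTransGen F (inr e₁) x ∧ Relation.ReflTransGen F (inr e₂) y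

/-- Nodes are concurrent if they are neither causally related nor in conflict. -/
def bpConcurrent {C E : Type} (F : C ⊕ E → C ⊕ E → Prop) (x y : C ⊕ E) : Prop :=
  ¬ Relation.ReflTransGen F x y ∧ ¬ Relation.ReflTransGen F y x ∧ ¬ bpConflict F x y

/-- The past `[e]` of an event: all events `e' ≤ e`. -/
def bpPast {C E : Type} (F : C ⊕ E → C ⊕ E → Prop) (e : E) : Set E :=
  {e' | Relation.ReflTransGen F (inr e') (inr e)}

/-- A condition is initial if it has no input event. -/
def bpInitial {C E : Type} (F : C ⊕ E → C ⊕ E → Prop) (c : C) : Prop :=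
  ¬ ∃ e : E, F (inr e) (inl c)

/-- The cut `M(e)`: conditions produced by (or initial and untouched by) the
past of `e` and not consumed by it. -/
def bpCut {C E : Type} (F : C ⊕ E → C ⊕ E → Prop) (e : E) : Set C :=
  {c | (bpInitial F c ∨ ∃ e' ∈ bpPast F e, F (inr e') (inl c)) ∧
       ∀ e'' ∈ bpPast F e, ¬ F (inl c) (inr e'')}

/-- `e'` is a strong cause of `e` (`e' ≪ e`): `e' < e` and `b' < b` for every
`b ∈ M(e) \ M(e')` and `b' ∈ M(e') \ M(e)`. -/
def bpSCause {C E : Type} (F : C ⊕ E → C ⊕ E → Prop) (e' e : E) : Prop :=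
  Relation.TransGen F (inr e') (inr e) ∧
  ∀ b ∈ bpCut F e, b ∉ bpCut F e' → ∀ b' ∈ bpCut F e', b' ∉ bpCut F e →
    Relation.TransGen F (inl b') (inl b)

/-- A branching process of a parallel composition of LTSs indexed by `ι`:
an occurrence net whose conditions are labelled with components (`comp`),
with one condition per component in the initial cut, and where every event
consumes and produces exactly one condition per participating component. -/
structure BProc (ι C E : Type) where
  F : C ⊕ E → C ⊕ E → Prop
  comp : C → ι
  flow_cc : ∀ c c' : C, ¬ F (inl c) (inl c')
  flow_ee : ∀ e e' : E, ¬ F (inr e) (inr e')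
  cond_pre_unique : ∀ (c : C) (e e' : E), F (inr e) (inl c) → F (inr e') (inl c) → e = e'
  acyclic : ∀ x : C ⊕ E, ¬ Relation.TransGen F x x
  past_finite : ∀ e : E, (bpPast F e).Finite
  pre_nonempty : ∀ e : E, ∃ c : C, F (inl c) (inr e)
  no_self_conflict : ∀ e : E, ¬ bpConflict F (inr e) (inr e)
  pre_comp_inj : ∀ (e : E) (c c' : C),
    F (inl c) (inr e) → F (inl c') (inr e) → comp c = comp c' → c = c'
  post_comp_inj : ∀ (e : E) (c c' : C),
    F (inr e) (inl c) → F (inr e) (inl c') → comp c = comp c' → c = c'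
  pre_post_comp : ∀ (e : E) (c : C),
    F (inl c) (inr e) → ∃ c', F (inr e) (inl c') ∧ comp c' = comp c
  post_pre_comp : ∀ (e : E) (c : C),
    F (inr e) (inl c) → ∃ c', F (inl c') (inr e) ∧ comp c' = comp c
  init_unique : ∀ c c' : C, bpInitial F c → bpInitial F c' → comp c = comp c' → c = c'
  init_exists : ∀ i : ι, ∃ c : C, comp c = i ∧ bpInitial F c

/-- Lemma 2: if `e' ≪ e` and `ê` is concurrent with both `e'`
and `e`, then `([e] \ [e']) ∩ [ê] = ∅`. -/
theorem strong_cause_concurrent_disjoint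
    {ι C E : Type} (N : BProc ι C E) (e' e ehat : E)
    (h : bpSCause N.F e' e)
    (h1 : bpConcurrent N.F (inr ehat) (inr e'))
    (h2 : bpConcurrent N.F (inr ehat) (inr e)) :
    (bpPast N.F e \ bpPast N.F e') ∩ bpPast N.F ehat = ∅ := by
  classical
  by_contra h0
  have hS : ((bpPast N.F e \ bpPast N.F e') ∩ bpPast N.F ehat).Nonempty :=
    Set.nonempty_iff_ne_empty.2 h0
  have hSfin : ((bpPast N.F e \ bpPast N.F e') ∩ bpPast N.F ehat).Finite :=
    (N.past_finite e).subset (fun x hx => hx.1.1)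
  obtain ⟨f, hfS, hfmax⟩ :=
    Set.Finite.exists_maximalFor (fun s => (bpPast N.F s).ncard) _ hSfin hS
  obtain ⟨⟨hfe, hfe'⟩, hfhat⟩ := hfS
  -- f ≠ ehat, so f →+ ehat; decompose as f → d → q →* ehat
  have hfne : f ≠ ehat := by
    rintro rfl
    exact h2.1 hfe
  obtain ⟨x, hfx, hxhat⟩ :=
    (Relation.ReflTransGen.cases_head hfhat).resolve_left (by simpa using hfne)
  obtain ⟨d, rfl⟩ : ∃ d : C, x = inl d := by
    cases x with
    | inl d => exact ⟨d, rfl⟩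
    | inr g => exact absurd hfx (N.flow_ee f g)
  obtain ⟨y, hdy, hyhat⟩ :=
    (Relation.ReflTransGen.cases_head hxhat).resolve_left (by simp)
  obtain ⟨q, rfl⟩ : ∃ q : E, y = inr q := by
    cases y with
    | inl c2 => exact absurd hdy (N.flow_cc d c2)
    | inr q => exact ⟨q, rfl⟩
  have hfq : Relation.TransGen N.F (inr f) (inr q) :=
    (Relation.TransGen.single hfx).tail hdy
  -- q is not in the past of e (maximality of f)
  have hqe : q ∉ bpPast N.F e := by
    intro hq
    have hqe' : q ∉ bpPast N.F e' := fun hq' => hfe' (hfq.to_reflTransGen.trans hq')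
    have hqS : q ∈ (bpPast N.F e \ bpPast N.F e') ∩ bpPast N.F ehat :=
      ⟨⟨hq, hqe'⟩, hyhat⟩
    have hsub : bpPast N.F f ⊂ bpPast N.F q := by
      constructor
      · intro s hs
        exact hs.trans hfq.to_reflTransGen
      · intro hsub'
        have hqf : q ∈ bpPast N.F f := hsub' Relation.ReflTransGen.refl
        exact N.acyclic (inr f) (hfq.trans_left hqf)
    have hlt := Set.ncard_lt_ncard hsub (N.past_finite q)
    have heq := hfmax (j := q) hqS (le_of_lt hlt)
    simp only at heq
    omega
  -- d ∈ M(e)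
  have hdMe : d ∈ bpCut N.F e := by
    refine ⟨Or.inr ⟨f, hfe, hfx⟩, ?_⟩
    intro r hr hdr
    have hrq : q ≠ r := fun hqr => hqe (hqr ▸ hr)
    exact h2.2.2 ⟨d, q, r, hrq, hdy, hdr, hyhat, hr⟩
  -- d ∉ M(e')
  have hdMe' : d ∉ bpCut N.F e' := by
    rintro ⟨hor, -⟩
    rcases hor with hinit | ⟨p, hp, hpd⟩
    · exact hinit ⟨f, hfx⟩
    · rw [N.cond_pre_unique d p f hpd hfx] at hp
      exact hfe' hp
  -- decompose e' →+ e as e' → c' → r' →* e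
  obtain ⟨z, he'z, hze⟩ := Relation.TransGen.head'_iff.mp h.1
  obtain ⟨c', rfl⟩ : ∃ c' : C, z = inl c' := by
    cases z with
    | inl c' => exact ⟨c', rfl⟩
    | inr g => exact absurd he'z (N.flow_ee e' g)
  obtain ⟨w, hc'w, hwe⟩ :=
    (Relation.ReflTransGen.cases_head hze).resolve_left (by simp)
  obtain ⟨r', rfl⟩ : ∃ r' : E, w = inr r' := by
    cases w with
    | inl c2 => exact absurd hc'w (N.flow_cc c' c2)
    | inr r' => exact ⟨r', rfl⟩
  -- c' ∈ M(e')
  have hc'Me' : c' ∈ bpCut N.F e' := by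
    refine ⟨Or.inr ⟨e', Relation.ReflTransGen.refl, he'z⟩, ?_⟩
    intro s hs hc's
    exact N.acyclic (inr e')
      (((Relation.TransGen.single he'z).tail hc's).trans_left hs)
  -- c' ∉ M(e)
  have hc'Me : c' ∉ bpCut N.F e := by
    rintro ⟨-, hno⟩
    exact hno r' hwe hc'w
  -- strong cause: c' →+ d, hence e' →+ ehat, contradiction
  have hcd : Relation.TransGen N.F (inl c') (inl d) :=
    h.2 d hdMe hdMe' c' hc'Me' hc'Me
  exact h1.2.1
    ((((Relation.TransGen.head he'z hcd).tail hdy).trans_left hyhat).to_reflTransGen)
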